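/- Let t ≤ s ≤ d be integers, T ⊆ {0,1,...,s-1} a set of size t, and p > s a prime. Then the minrank over F_p of the generalized Kneser graph K(d,s,T) is at most the sum over i from 0 to s-t of C(d,i). -/

import Mathlib

open Matrix


/-- A matrix `M` over a field `F` represents a simple graph `G` if all diagonal entries are
nonzero and entries at distinct non-adjacent pairs of vertices are zero. -/
def Represents {V F : Type*} [Field F] (G : SimpleGraph V) (M : Matrix V V F) : Prop :=
  (∀ v, M v v ≠ 0) ∧ ∀ u v : V, u ≠ v → ¬G.Adj u v → M u v = 0

/-- The minrank of a simple graph `G` over a field `F`. -/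
noncomputable def minrank (F : Type*) [Field F] {V : Type*} [Fintype V] [DecidableEq V]
    (G : SimpleGraph V) : ℕ :=
  sInf {r : ℕ | ∃ M : Matrix V V F, Represents G M ∧ M.rank = r}

/-- The generalized Kneser graph `K(d, s, T)`: vertices are the `s`-subsets of `[d]`, and two
distinct sets are adjacent iff the size of their intersection lies in `T`. -/
def kneser (d s : ℕ) (T : Set ℕ) : SimpleGraph {A : Finset (Fin d) // A.card = s} where
  Adj A B := A ≠ B ∧ (A.1 ∩ B.1).card ∈ T
  symm := ⟨fun A B h => ⟨h.1.symm, by rw [Finset.inter_comm]; exact h.2⟩⟩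
  loopless := ⟨fun A h => h.1 rfl⟩

/-- Existence of coefficients `c k` such that `∑ k C(x,k) c k` is the indicator of `x = s`
on a prescribed set `L` of `D+1` residues, using invertibility of a binomial-coefficient
matrix (a Vandermonde-type determinant argument). -/
lemma exists_coeffs (s D p : ℕ) [Fact p.Prime] (L : Finset ℕ) (hLcard : L.card = D + 1)
    (hLlt : ∀ x ∈ L, x < p) :
    ∃ c : ℕ → ZMod p, ∀ x ∈ L,
      ∑ k ∈ Finset.range (D + 1), (x.choose k : ZMod p) * c k = if x = s then 1 else 0 := by
  classical
  set n := D + 1 with hn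
  have hDp : D < p := by
    have : L ⊆ Finset.range p := fun x hx => Finset.mem_range.mpr (hLlt x hx)
    have := Finset.card_le_card this
    rw [hLcard, Finset.card_range] at this
    omega
  let e : {x // x ∈ L} ≃ Fin n := L.equivFin.trans (finCongr hLcard)
  let m : Fin n → ℕ := fun i => (e.symm i).1
  have hmL : ∀ i, m i ∈ L := fun i => (e.symm i).2
  have hminj : Function.Injective m := Subtype.val_injective.comp e.symm.injective
  let v : Fin n → ZMod p := fun i => (m i : ZMod p)
  have hvinj : Function.Injective v := by
    intro i j h
    apply hminj
    have := congrArg ZMod.val h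
    rwa [ZMod.val_cast_of_lt (hLlt _ (hmL i)), ZMod.val_cast_of_lt (hLlt _ (hmL j))] at this
  set B : Matrix (Fin n) (Fin n) (ZMod p) :=
    Matrix.of fun i k : Fin n => ((m i).choose (k : ℕ) : ZMod p) with hB
  have hBD : (Matrix.of fun i k : Fin n => ((descPochhammer (ZMod p) (k : ℕ)).eval (v i)))
      = B * Matrix.diagonal (fun k : Fin n => ((Nat.factorial (k : ℕ)) : ZMod p)) := by
    ext i k
    rw [Matrix.mul_diagonal]
    show (descPochhammer (ZMod p) (k : ℕ)).eval ((m i : ℕ) : ZMod p)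
        = ((m i).choose (k : ℕ) : ZMod p) * ((Nat.factorial (k : ℕ)) : ZMod p)
    rw [descPochhammer_eval_eq_descFactorial, Nat.descFactorial_eq_factorial_mul_choose]
    push_cast
    ring
  have hvand : (Matrix.vandermonde v).det ≠ 0 :=
    Matrix.det_vandermonde_ne_zero_iff.mpr hvinj
  have hdetB : B.det ≠ 0 := by
    intro h0
    apply hvand
    rw [Matrix.det_eval_matrixOfPolynomials_eq_det_vandermonde v
      (fun k => descPochhammer (ZMod p) (k : ℕ))
      (fun k => descPochhammer_natDegree (R := ZMod p) ((k : ℕ))) (fun k => monic_descPochhammer (ZMod p) ((k : ℕ)))]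
    rw [hBD, Matrix.det_mul, h0, zero_mul]
  have hBunit : IsUnit B.det := isUnit_iff_ne_zero.mpr hdetB
  set target : Fin n → ZMod p := fun i => if m i = s then 1 else 0 with htarget
  set cvec : Fin n → ZMod p := B⁻¹ *ᵥ target with hcvec
  have hBc : B *ᵥ cvec = target := by
    rw [hcvec, Matrix.mulVec_mulVec, Matrix.mul_nonsing_inv _ hBunit, Matrix.one_mulVec]
  refine ⟨fun k => if h : k < n then cvec ⟨k, h⟩ else 0, ?_⟩
  intro x hx
  obtain ⟨i, hi⟩ : ∃ i, m i = x := ⟨e ⟨x, hx⟩, by simp [m]⟩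
  have hrow := congrFun hBc i
  rw [Matrix.mulVec, dotProduct] at hrow
  calc ∑ k ∈ Finset.range n, (x.choose k : ZMod p)
        * (if h : k < n then cvec ⟨k, h⟩ else 0)
      = ∑ k : Fin n, (x.choose (k : ℕ) : ZMod p)
        * (if h : (k : ℕ) < n then cvec ⟨(k : ℕ), h⟩ else 0) :=
        (Fin.sum_univ_eq_sum_range _ n).symm
    _ = ∑ k : Fin n, B i k * cvec k := by
        refine Finset.sum_congr rfl fun k _ => ?_
        rw [dif_pos k.isLt, Fin.eta, hB, Matrix.of_apply, hi]
    _ = target i := hrow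
    _ = if x = s then 1 else 0 := by simp only [htarget]; rw [hi]

/-- For `t ≤ s ≤ d`, a set `T ⊆ {0, 1, …, s-1}` of size `t`, and a prime `p > s`, the minrank
of `K(d, s, T)` over `F_p` is at most `∑_{i=0}^{s-t} C(d, i)`. -/
theorem minrank_kneser_le_sum (d s t : ℕ) (T : Finset ℕ) (hT : ∀ i ∈ T, i < s)
    (hTcard : T.card = t) (hts : t ≤ s) (hsd : s ≤ d) (p : ℕ) [Fact p.Prime] (hps : s < p) :
    minrank (ZMod p) (kneser d s (T : Set ℕ)) ≤ ∑ i ∈ Finset.range (s - t + 1), d.choose i := by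
  classical
  set D := s - t with hD
  set n := D + 1 with hn
  set J : Finset ℕ := Finset.range s \ T with hJ
  have hTsub : T ⊆ Finset.range s := fun i hi => Finset.mem_range.mpr (hT i hi)
  have hJcard : J.card = D := by
    rw [hJ, Finset.card_sdiff_of_subset hTsub, Finset.card_range, hTcard]
  have hsJ : s ∉ J := by
    intro h
    rw [hJ, Finset.mem_sdiff, Finset.mem_range] at h
    exact lt_irrefl s h.1
  set L : Finset ℕ := insert s J with hL
  have hLcard : L.card = n := by rw [hL, Finset.card_insert_of_notMem hsJ, hJcard]
  have hLlt : ∀ x ∈ L, x < p := by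
    intro x hx
    rcases Finset.mem_insert.mp hx with rfl | hx
    · exact hps
    · exact lt_trans (Finset.mem_range.mp (Finset.mem_sdiff.mp hx).1) hps
  obtain ⟨c, hc⟩ := exists_coeffs s D p L hLcard hLlt
  -- the matrices
  set P : Matrix {A : Finset (Fin d) // A.card = s} {I : Finset (Fin d) // I.card ≤ D}
      (ZMod p) := Matrix.of fun A I => if I.1 ⊆ A.1 then 1 else 0 with hP
  set N : Matrix {I : Finset (Fin d) // I.card ≤ D} {A : Finset (Fin d) // A.card = s}
      (ZMod p) := Matrix.of fun I B => if I.1 ⊆ B.1 then c I.1.card else 0 with hN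
  -- the key entry computation
  have hsumW : ∀ C : Finset (Fin d), (∑ I : {I : Finset (Fin d) // I.card ≤ D}, if I.1 ⊆ C then c I.1.card else 0)
      = ∑ k ∈ Finset.range n, (C.card.choose k : ZMod p) * c k := by
    intro C
    have h1 : (∑ I : {I : Finset (Fin d) // I.card ≤ D}, if I.1 ⊆ C then c I.1.card else 0)
        = ∑ I ∈ Finset.univ.filter (fun I : Finset (Fin d) => I.card ≤ D),
            (if I ⊆ C then c I.card else 0) :=
      (Finset.sum_subtype (p := fun I : Finset (Fin d) => I.card ≤ D)
        (Finset.univ.filter (fun I : Finset (Fin d) => I.card ≤ D))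
        (fun I => by simp) (fun I => if I ⊆ C then c I.card else 0)).symm
    rw [h1, ← Finset.sum_filter]
    have h2 : (Finset.univ.filter (fun I : Finset (Fin d) => I.card ≤ D)).filter
        (fun I => I ⊆ C) = C.powerset.filter (fun I => I.card ≤ D) := by
      ext I
      simp [Finset.mem_powerset, and_comm]
    rw [h2]
    rw [← Finset.sum_fiberwise_of_maps_to (g := fun I : Finset (Fin d) => I.card)
      (t := Finset.range n) (by
        intro I hI
        simp only [Finset.mem_filter] at hI
        simp only [Finset.mem_range]
        omega) (fun I => c I.card)]
    refine Finset.sum_congr rfl fun k hk => ?_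
    have hkD : k ≤ D := by
      simp only [Finset.mem_range] at hk
      omega
    have h3 : (C.powerset.filter (fun I => I.card ≤ D)).filter
        (fun I => I.card = k) = Finset.powersetCard k C := by
      ext I
      simp only [Finset.mem_filter, Finset.mem_powerset, Finset.mem_powersetCard]
      constructor
      · rintro ⟨⟨h1, _⟩, h2⟩; exact ⟨h1, h2⟩
      · rintro ⟨h1, h2⟩; exact ⟨⟨h1, h2 ▸ hkD⟩, h2⟩
    rw [h3]
    have h4 : ∑ I ∈ Finset.powersetCard k C, c I.card
        = ∑ _I ∈ Finset.powersetCard k C, c k :=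
      Finset.sum_congr rfl fun I hI => by rw [(Finset.mem_powersetCard.mp hI).2]
    rw [h4, Finset.sum_const, Finset.card_powersetCard, nsmul_eq_mul]
  have hentry : ∀ A B : {A : Finset (Fin d) // A.card = s}, (P * N) A B
      = ∑ k ∈ Finset.range n, (((A.1 ∩ B.1).card).choose k : ZMod p) * c k := by
    intro A B
    rw [Matrix.mul_apply, ← hsumW (A.1 ∩ B.1)]
    refine Finset.sum_congr rfl fun I _ => ?_
    rw [hP, hN]
    simp only [Matrix.of_apply]
    by_cases h1 : I.1 ⊆ A.1 <;> by_cases h2 : I.1 ⊆ B.1 <;>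
      simp [h1, h2, Finset.subset_inter_iff]
  -- key value facts
  have hval : ∀ A B : {A : Finset (Fin d) // A.card = s}, (A.1 ∩ B.1).card ∈ L → (P * N) A B
      = if (A.1 ∩ B.1).card = s then 1 else 0 := by
    intro A B hmem
    rw [hentry A B, hc _ hmem]
  have hcardlt : ∀ A B : {A : Finset (Fin d) // A.card = s}, A ≠ B → (A.1 ∩ B.1).card < s := by
    intro A B hne
    have hle : (A.1 ∩ B.1).card ≤ s := by
      calc (A.1 ∩ B.1).card ≤ A.1.card := Finset.card_le_card Finset.inter_subset_left
        _ = s := A.2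
    rcases lt_or_eq_of_le hle with h | h
    · exact h
    · exfalso
      have hAB : A.1 ∩ B.1 = A.1 :=
        Finset.eq_of_subset_of_card_le Finset.inter_subset_left (by rw [h, A.2])
      have hsub : A.1 ⊆ B.1 := Finset.inter_eq_left.mp hAB
      have : A.1 = B.1 := Finset.eq_of_subset_of_card_le hsub (by rw [A.2, B.2])
      exact hne (Subtype.ext this)
  have hrep : Represents (kneser d s (T : Set ℕ)) (P * N) := by
    constructor
    · intro A
      have hAA : A.1 ∩ A.1 = A.1 := Finset.inter_self _
      have : (A.1 ∩ A.1).card = s := by rw [hAA, A.2]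
      rw [hval A A (by rw [this]; exact Finset.mem_insert_self _ _), if_pos this]
      exact one_ne_zero
    · intro A B hne hadj
      have hnotT : (A.1 ∩ B.1).card ∉ T := by
        intro hmem
        exact hadj (show A ≠ B ∧ (A.1 ∩ B.1).card ∈ (T : Set ℕ) from ⟨hne, hmem⟩)
      have hlt := hcardlt A B hne
      have hmemL : (A.1 ∩ B.1).card ∈ L :=
        Finset.mem_insert_of_mem (Finset.mem_sdiff.mpr ⟨Finset.mem_range.mpr hlt, hnotT⟩)
      rw [hval A B hmemL, if_neg (by omega)]
  -- rank bound
  have hrank : (P * N).rank ≤ Fintype.card {I : Finset (Fin d) // I.card ≤ D} :=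
    le_trans (Matrix.rank_mul_le_left P N) (P.rank_le_card_width)
  have hcardW : Fintype.card {I : Finset (Fin d) // I.card ≤ D}
      = ∑ i ∈ Finset.range n, d.choose i := by
    rw [Fintype.card_subtype]
    rw [Finset.card_eq_sum_card_fiberwise (f := fun I : Finset (Fin d) => I.card)
      (t := Finset.range n) (by
        intro I hI
        simp only [Finset.coe_filter, Finset.mem_filter, Set.mem_setOf_eq, Finset.mem_univ, true_and] at hI
        simp only [Finset.mem_coe, Finset.mem_range]
        omega)]
    refine Finset.sum_congr rfl fun k hk => ?_
    have hkD : k ≤ D := by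
      simp only [Finset.mem_range] at hk
      omega
    have h3 : (Finset.univ.filter (fun I : Finset (Fin d) => I.card ≤ D)).filter
        (fun I => I.card = k) = Finset.powersetCard k (Finset.univ : Finset (Fin d)) := by
      rw [Finset.powersetCard_eq_filter, Finset.powerset_univ]
      ext I
      simp only [Finset.mem_filter, Finset.mem_univ, true_and]
      constructor
      · rintro ⟨_, h⟩; exact h
      · rintro h; exact ⟨h ▸ hkD, h⟩
    rw [h3, Finset.card_powersetCard, Finset.card_univ, Fintype.card_fin]
  exact le_trans (Nat.sInf_le ⟨P * N, hrep, rfl⟩) (le_trans hrank (le_of_eq hcardW))
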